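/- Let A and B be disjoint finite sets, let 𝛼 be an a-partition of A and 𝛽 a b-partition of B, and let c be an integer with 1 ≤ a ≤ c, 1 ≤ b ≤ c, and a + b ≥ c. Then the number of c-partitions of A ∪ B each of whose parts is either a part of 𝛼, a part of 𝛽, or the union of a part of 𝛼 with a part of 𝛽, equals C(a, c−b) · C(b, c−a) · (a+b−c)!, where C denotes the binomial coefficient. -/

import Mathlib

/-- A `c`-partition of a finite set `S`: a set of `c` pairwise disjoint nonempty
subsets (parts) whose union is `S`. -/
def IsPartition {α : Type*} (S : Finset α) (c : ℕ) (P : Finset (Finset α)) : Prop :=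
  P.card = c ∧ (∀ p ∈ P, p.Nonempty) ∧
    (∀ p ∈ P, ∀ q ∈ P, p ≠ q → Disjoint p q) ∧ (∀ x, x ∈ S ↔ ∃ p ∈ P, x ∈ p)

/-- `QSet A B Pa Pb c` : the set of `c`-partitions of `A ∪ B` each of whose parts is a
part of `Pa`, a part of `Pb`, or the union of a part of `Pa` with a part of `Pb`. -/
def QSet {α : Type*} [DecidableEq α] (A B : Finset α)
    (Pa Pb : Finset (Finset α)) (c : ℕ) : Set (Finset (Finset α)) :=
  {P | IsPartition (A ∪ B) c P ∧
    ∀ p ∈ P, p ∈ Pa ∨ p ∈ Pb ∨ ∃ q ∈ Pa, ∃ r ∈ Pb, p = q ∪ r}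

set_option linter.unusedSectionVars false

section CardQSetAux

variable {α : Type*} [DecidableEq α]

variable {α : Type*} [DecidableEq α]


lemma part_subset {S : Finset α} {c : ℕ} {P : Finset (Finset α)}
    (h : IsPartition S c P) {p : Finset α} (hp : p ∈ P) : p ⊆ S := fun x hx =>
  (h.2.2.2 x).2 ⟨p, hp, hx⟩

lemma part_eq {S : Finset α} {c : ℕ} {P : Finset (Finset α)}
    (h : IsPartition S c P) {p q : Finset α} (hp : p ∈ P) (hq : q ∈ P)
    {x : α} (hxp : x ∈ p) (hxq : x ∈ q) : p = q := by
  by_contra hne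
  exact absurd hxq (Finset.disjoint_left.mp (h.2.2.1 p hp q hq hne) hxp)

lemma union_cancel {A B : Finset α} (hAB : Disjoint A B) {q r r' : Finset α}
    (hq : q ⊆ A) (hr : r ⊆ B) (hr' : r' ⊆ B) (h : q ∪ r = q ∪ r') : r = r' := by
  ext y
  constructor
  · intro hy
    have : y ∈ q ∪ r' := h ▸ Finset.mem_union_right _ hy
    rcases Finset.mem_union.mp this with h' | h'
    · exact absurd (hr hy) (Finset.disjoint_left.mp hAB (hq h'))
    · exact h'
  · intro hy
    have : y ∈ q ∪ r := h ▸ Finset.mem_union_right _ hy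
    rcases Finset.mem_union.mp this with h' | h'
    · exact absurd (hr' hy) (Finset.disjoint_left.mp hAB (hq h'))
    · exact h'

def phi (Pa Pb : Finset (Finset α)) (S : Finset (Finset α)) (f : {x // x ∈ S} ↪ {x // x ∈ Pb}) :
    Finset (Finset α) :=
  (Pa \ S) ∪ (Pb \ S.attach.image fun q => (f q : Finset α)) ∪
    S.attach.image fun (q : {x // x ∈ S}) => (q : Finset α) ∪ (f q : Finset α)

variable {A B : Finset α} {a b c : ℕ} {Pa Pb : Finset (Finset α)}

lemma phi_mem_QSet (hAB : Disjoint A B) (hPa : IsPartition A a Pa) (hPb : IsPartition B b Pb)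
    (hac : a ≤ c) (hbc : b ≤ c) (habc : c ≤ a + b)
    {S : Finset (Finset α)} (hS : S ⊆ Pa) (hcard : S.card = a + b - c)
    (f : {x // x ∈ S} ↪ {x // x ∈ Pb}) :
    phi Pa Pb S f ∈ QSet A B Pa Pb c := by
  set T : Finset (Finset α) := S.attach.image fun q => (f q : Finset α) with hT
  set M : Finset (Finset α) := S.attach.image fun (q : {x // x ∈ S}) => (q : Finset α) ∪ (f q : Finset α) with hM
  have hsubA : ∀ p ∈ Pa, p ⊆ A := fun p hp => part_subset hPa hp
  have hsubB : ∀ p ∈ Pb, p ⊆ B := fun p hp => part_subset hPb hp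
  have hdisjAB : ∀ p ⊆ A, ∀ r ⊆ B, Disjoint p r := fun p hp r hr => hAB.mono hp hr
  have hanb : ∀ p ∈ Pa, p ∉ Pb := by
    intro p hp hp'
    obtain ⟨x, hx⟩ := hPa.2.1 p hp
    exact Finset.disjoint_left.mp hAB (hsubA p hp hx) (hsubB p hp' hx)
  -- merged parts contain points of both A and B
  have hMne : ∀ q : {x // x ∈ S}, ((q : Finset α) ∪ (f q : Finset α)).Nonempty := by
    intro q
    obtain ⟨x, hx⟩ := hPa.2.1 _ (hS q.2)
    exact ⟨x, Finset.mem_union_left _ hx⟩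
  have hMnA : ∀ q : {x // x ∈ S}, ¬ ((q : Finset α) ∪ (f q : Finset α) ⊆ A) := by
    intro q h
    obtain ⟨y, hy⟩ := hPb.2.1 _ (f q).2
    exact Finset.disjoint_left.mp hAB (h (Finset.mem_union_right _ hy)) (hsubB _ (f q).2 hy)
  have hMnB : ∀ q : {x // x ∈ S}, ¬ ((q : Finset α) ∪ (f q : Finset α) ⊆ B) := by
    intro q h
    obtain ⟨y, hy⟩ := hPa.2.1 _ (hS q.2)
    exact Finset.disjoint_left.mp hAB (hsubA _ (hS q.2) hy) (h (Finset.mem_union_left _ hy))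
  have hMnPa : ∀ p ∈ M, p ∉ Pa := by
    intro p hp hp'
    obtain ⟨q, _, rfl⟩ := Finset.mem_image.mp hp
    exact hMnA q (hsubA _ hp')
  have hMnPb : ∀ p ∈ M, p ∉ Pb := by
    intro p hp hp'
    obtain ⟨q, _, rfl⟩ := Finset.mem_image.mp hp
    exact hMnB q (hsubB _ hp')
  -- injectivity of the merged-part map
  have hMinj : ∀ q q' : {x // x ∈ S},
      ((q : Finset α) ∪ (f q : Finset α)) = ((q' : Finset α) ∪ (f q' : Finset α)) → q = q' := by
    intro q q' h
    have hq : (q : Finset α) = (q' : Finset α) := by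
      have h1 : ∀ (u v : {x // x ∈ S}),
          ((u : Finset α) ∪ (f u : Finset α)) = ((v : Finset α) ∪ (f v : Finset α)) →
          (u : Finset α) ⊆ (v : Finset α) := by
        intro u v huv x hx
        have : x ∈ (v : Finset α) ∪ (f v : Finset α) := huv ▸ Finset.mem_union_left _ hx
        rcases Finset.mem_union.mp this with h' | h'
        · exact h'
        · exact absurd (hsubB _ (f v).2 h')
            (Finset.disjoint_left.mp hAB (hsubA _ (hS u.2) hx))
      exact Finset.Subset.antisymm (h1 q q' h) (h1 q' q h.symm)
    exact Subtype.ext hq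
  have hTsub : T ⊆ Pb := by
    intro r hr
    obtain ⟨q, _, rfl⟩ := Finset.mem_image.mp hr
    exact (f q).2
  -- cardinalities
  have hTcard : T.card = a + b - c := by
    rw [hT, Finset.card_image_of_injective _ (fun q q' h => f.injective (Subtype.ext h)),
      Finset.card_attach, hcard]
  have hMcard : M.card = a + b - c := by
    rw [hM, Finset.card_image_of_injective _ hMinj, Finset.card_attach, hcard]
  have hd1 : Disjoint (Pa \ S) (Pb \ T) := by
    rw [Finset.disjoint_left]
    intro p hp hp'
    exact hanb p (Finset.mem_sdiff.mp hp).1 (Finset.mem_sdiff.mp hp').1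
  have hd2 : Disjoint ((Pa \ S) ∪ (Pb \ T)) M := by
    rw [Finset.disjoint_left]
    intro p hp hp'
    rcases Finset.mem_union.mp hp with h | h
    · exact hMnPa p hp' (Finset.mem_sdiff.mp h).1
    · exact hMnPb p hp' (Finset.mem_sdiff.mp h).1
  have hcardphi : (phi Pa Pb S f).card = c := by
    have h1 : (Pa \ S).card = a - (a + b - c) := by
      rw [Finset.card_sdiff_of_subset hS, hPa.1, hcard]
    have h2 : (Pb \ T).card = b - (a + b - c) := by
      rw [Finset.card_sdiff_of_subset hTsub, hPb.1, hTcard]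
    rw [phi, Finset.card_union_of_disjoint hd2, Finset.card_union_of_disjoint hd1,
      h1, h2, hMcard]
    omega
  refine ⟨⟨hcardphi, ?_, ?_, ?_⟩, ?_⟩
  · -- nonempty
    intro p hp
    rcases Finset.mem_union.mp hp with h | h
    · rcases Finset.mem_union.mp h with h' | h'
      · exact hPa.2.1 p (Finset.mem_sdiff.mp h').1
      · exact hPb.2.1 p (Finset.mem_sdiff.mp h').1
    · obtain ⟨q, _, rfl⟩ := Finset.mem_image.mp h
      exact hMne q
  · -- pairwise disjoint
    intro p hp p' hp' hne
    have key : ∀ u ∈ phi Pa Pb S f, ∀ v ∈ phi Pa Pb S f, u ≠ v →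
        (u ∈ Pa \ S ∨ u ∈ Pb \ T ∨ u ∈ M) := by
      intro u hu _ _ _
      rcases Finset.mem_union.mp hu with h | h
      · rcases Finset.mem_union.mp h with h' | h'
        · exact Or.inl h'
        · exact Or.inr (Or.inl h')
      · exact Or.inr (Or.inr h)
    -- disjointness of a Pa-part with a merged part
    have dPaM : ∀ u ∈ Pa \ S, ∀ q : {x // x ∈ S},
        Disjoint u ((q : Finset α) ∪ (f q : Finset α)) := by
      intro u hu q
      obtain ⟨huPa, huS⟩ := Finset.mem_sdiff.mp hu
      have h1 : u ≠ (q : Finset α) := fun h => huS (h ▸ q.2)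
      refine Finset.disjoint_union_right.mpr ⟨hPa.2.2.1 u huPa _ (hS q.2) h1, ?_⟩
      exact hdisjAB u (hsubA u huPa) _ (hsubB _ (f q).2)
    have dPbM : ∀ u ∈ Pb \ T, ∀ q : {x // x ∈ S},
        Disjoint u ((q : Finset α) ∪ (f q : Finset α)) := by
      intro u hu q
      obtain ⟨huPb, huT⟩ := Finset.mem_sdiff.mp hu
      have h1 : u ≠ ((f q) : Finset α) := by
        intro h
        exact huT (h ▸ Finset.mem_image.mpr ⟨q, Finset.mem_attach _ _, rfl⟩)
      refine Finset.disjoint_union_right.mpr ⟨?_, hPb.2.2.1 u huPb _ (f q).2 h1⟩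
      exact (hdisjAB _ (hsubA _ (hS q.2)) u (hsubB u huPb)).symm
    rcases key p hp p' hp' hne with h | h | h <;>
      rcases key p' hp' p hp hne.symm with h' | h' | h'
    · exact hPa.2.2.1 p (Finset.mem_sdiff.mp h).1 p' (Finset.mem_sdiff.mp h').1 hne
    · exact hdisjAB p (hsubA p (Finset.mem_sdiff.mp h).1) p'
        (hsubB p' (Finset.mem_sdiff.mp h').1)
    · obtain ⟨q, _, rfl⟩ := Finset.mem_image.mp h'
      exact dPaM p h q
    · exact (hdisjAB p' (hsubA p' (Finset.mem_sdiff.mp h').1) p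
        (hsubB p (Finset.mem_sdiff.mp h).1)).symm
    · exact hPb.2.2.1 p (Finset.mem_sdiff.mp h).1 p' (Finset.mem_sdiff.mp h').1 hne
    · obtain ⟨q, _, rfl⟩ := Finset.mem_image.mp h'
      exact dPbM p h q
    · obtain ⟨q, _, rfl⟩ := Finset.mem_image.mp h
      exact (dPaM p' h' q).symm
    · obtain ⟨q, _, rfl⟩ := Finset.mem_image.mp h
      exact (dPbM p' h' q).symm
    · obtain ⟨q, _, rfl⟩ := Finset.mem_image.mp h
      obtain ⟨q', _, rfl⟩ := Finset.mem_image.mp h'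
      have hqq' : q ≠ q' := fun hh => hne (by rw [hh])
      refine Finset.disjoint_union_left.mpr ⟨?_, ?_⟩ <;>
        refine Finset.disjoint_union_right.mpr ⟨?_, ?_⟩
      · exact hPa.2.2.1 _ (hS q.2) _ (hS q'.2) (fun hh => hqq' (Subtype.ext hh))
      · exact hdisjAB _ (hsubA _ (hS q.2)) _ (hsubB _ (f q').2)
      · exact (hdisjAB _ (hsubA _ (hS q'.2)) _ (hsubB _ (f q).2)).symm
      · exact hPb.2.2.1 _ (f q).2 _ (f q').2
          (fun hh => hqq' (f.injective (Subtype.ext hh)))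
  · -- covers A ∪ B
    intro x
    constructor
    · intro hx
      rcases Finset.mem_union.mp hx with hx | hx
      · obtain ⟨q, hq, hxq⟩ := (hPa.2.2.2 x).mp hx
        by_cases hqS : q ∈ S
        · exact ⟨(⟨q, hqS⟩ : {x // x ∈ S}) ∪ (f ⟨q, hqS⟩ : Finset α),
            Finset.mem_union_right _ (Finset.mem_image.mpr ⟨⟨q, hqS⟩, Finset.mem_attach _ _, rfl⟩),
            Finset.mem_union_left _ hxq⟩
        · exact ⟨q, Finset.mem_union_left _
            (Finset.mem_union_left _ (Finset.mem_sdiff.mpr ⟨hq, hqS⟩)), hxq⟩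
      · obtain ⟨r, hr, hxr⟩ := (hPb.2.2.2 x).mp hx
        by_cases hrT : r ∈ T
        · obtain ⟨q, _, rfl⟩ := Finset.mem_image.mp hrT
          exact ⟨(q : Finset α) ∪ (f q : Finset α),
            Finset.mem_union_right _ (Finset.mem_image.mpr ⟨q, Finset.mem_attach _ _, rfl⟩),
            Finset.mem_union_right _ hxr⟩
        · exact ⟨r, Finset.mem_union_left _
            (Finset.mem_union_right _ (Finset.mem_sdiff.mpr ⟨hr, hrT⟩)), hxr⟩
    · rintro ⟨p, hp, hxp⟩
      rcases Finset.mem_union.mp hp with h | h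
      · rcases Finset.mem_union.mp h with h' | h'
        · exact Finset.mem_union_left _ (hsubA p (Finset.mem_sdiff.mp h').1 hxp)
        · exact Finset.mem_union_right _ (hsubB p (Finset.mem_sdiff.mp h').1 hxp)
      · obtain ⟨q, _, rfl⟩ := Finset.mem_image.mp h
        rcases Finset.mem_union.mp hxp with h' | h'
        · exact Finset.mem_union_left _ (hsubA _ (hS q.2) h')
        · exact Finset.mem_union_right _ (hsubB _ (f q).2 h')
  · -- part condition
    intro p hp
    rcases Finset.mem_union.mp hp with h | h
    · rcases Finset.mem_union.mp h with h' | h'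
      · exact Or.inl (Finset.mem_sdiff.mp h').1
      · exact Or.inr (Or.inl (Finset.mem_sdiff.mp h').1)
    · obtain ⟨q, _, rfl⟩ := Finset.mem_image.mp h
      exact Or.inr (Or.inr ⟨q, hS q.2, f q, (f q).2, rfl⟩)

lemma union_cancel_left {A B : Finset α} (hAB : Disjoint A B) {q q' r : Finset α}
    (hq : q ⊆ A) (hq' : q' ⊆ A) (hr : r ⊆ B) (h : q ∪ r = q' ∪ r) : q = q' :=
  union_cancel hAB.symm hr hq hq' (by rw [Finset.union_comm r q, Finset.union_comm r q', h])

lemma merged_not_single (hAB : Disjoint A B) (hPa : IsPartition A a Pa)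
    (hPb : IsPartition B b Pb) {γ : Finset (Finset α)} (hpart : IsPartition (A ∪ B) c γ)
    {q r : Finset α} (hq : q ∈ Pa) (hr : r ∈ Pb) (hqr : q ∪ r ∈ γ) : q ∉ γ ∧ r ∉ γ := by
  obtain ⟨x, hx⟩ := hPa.2.1 q hq
  obtain ⟨y, hy⟩ := hPb.2.1 r hr
  constructor
  · intro hqγ
    have he : q = q ∪ r := part_eq hpart hqγ hqr hx (Finset.mem_union_left _ hx)
    have hyq : y ∈ q := by rw [he]; exact Finset.mem_union_right _ hy
    exact Finset.disjoint_left.mp hAB (part_subset hPa hq hyq) (part_subset hPb hr hy)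
  · intro hrγ
    have he : r = q ∪ r := part_eq hpart hrγ hqr hy (Finset.mem_union_right _ hy)
    have hxr : x ∈ r := by rw [he]; exact Finset.mem_union_left _ hx
    exact Finset.disjoint_left.mp hAB (part_subset hPa hq hx) (part_subset hPb hr hxr)

lemma exists_unique_partner (hAB : Disjoint A B) (hPa : IsPartition A a Pa)
    (hPb : IsPartition B b Pb) {γ : Finset (Finset α)} (hγ : γ ∈ QSet A B Pa Pb c)
    {q : Finset α} (hq : q ∈ Pa) (hqγ : q ∉ γ) : ∃! r, r ∈ Pb ∧ q ∪ r ∈ γ := by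
  obtain ⟨hpart, hparts⟩ := hγ
  obtain ⟨x, hx⟩ := hPa.2.1 q hq
  have hxA : x ∈ A := part_subset hPa hq hx
  obtain ⟨p, hp, hxp⟩ := (hpart.2.2.2 x).mp (Finset.mem_union_left _ hxA)
  rcases hparts p hp with h | h | ⟨q', hq', r, hr, rfl⟩
  · exact absurd (part_eq hPa h hq hxp hx ▸ hp) hqγ
  · exact absurd (part_subset hPb h hxp) (Finset.disjoint_left.mp hAB hxA)
  · have hxq' : x ∈ q' := by
      rcases Finset.mem_union.mp hxp with h' | h'
      · exact h'
      · exact absurd (part_subset hPb hr h') (Finset.disjoint_left.mp hAB hxA)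
    have hqq : q' = q := part_eq hPa hq' hq hxq' hx
    subst hqq
    refine ⟨r, ⟨hr, hp⟩, ?_⟩
    rintro r' ⟨hr', hpr'⟩
    have he : q' ∪ r' = q' ∪ r :=
      part_eq hpart hpr' hp (Finset.mem_union_left _ hx) (Finset.mem_union_left _ hx)
    exact union_cancel hAB (part_subset hPa hq) (part_subset hPb hr') (part_subset hPb hr) he

lemma exists_partner' (hAB : Disjoint A B) (hPa : IsPartition A a Pa)
    (hPb : IsPartition B b Pb) {γ : Finset (Finset α)} (hγ : γ ∈ QSet A B Pa Pb c)
    {r : Finset α} (hr : r ∈ Pb) (hrγ : r ∉ γ) : ∃ q ∈ Pa, q ∪ r ∈ γ := by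
  obtain ⟨hpart, hparts⟩ := hγ
  obtain ⟨y, hy⟩ := hPb.2.1 r hr
  have hyB : y ∈ B := part_subset hPb hr hy
  obtain ⟨p, hp, hyp⟩ := (hpart.2.2.2 y).mp (Finset.mem_union_right _ hyB)
  rcases hparts p hp with h | h | ⟨q', hq', r', hr', rfl⟩
  · exact absurd (part_subset hPa h hyp) (Finset.disjoint_right.mp hAB hyB)
  · exact absurd (part_eq hPb h hr hyp hy ▸ hp) hrγ
  · have hyr' : y ∈ r' := by
      rcases Finset.mem_union.mp hyp with h' | h'
      · exact absurd (part_subset hPa hq' h') (Finset.disjoint_right.mp hAB hyB)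
      · exact h'
    have hrr : r' = r := part_eq hPb hr' hr hyr' hy
    subst hrr
    exact ⟨q', hq', hp⟩

lemma inter_A_of_merged (hAB : Disjoint A B) (hPa : IsPartition A a Pa)
    (hPb : IsPartition B b Pb) {q r : Finset α} (hq : q ∈ Pa) (hr : r ∈ Pb) :
    (q ∪ r) ∩ A = q := by
  ext y
  simp only [Finset.mem_inter, Finset.mem_union]
  constructor
  · rintro ⟨h1 | h1, h2⟩
    · exact h1
    · exact absurd (part_subset hPb hr h1) (Finset.disjoint_left.mp hAB h2)
  · intro h
    exact ⟨Or.inl h, part_subset hPa hq h⟩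

lemma inter_B_of_merged (hAB : Disjoint A B) (hPa : IsPartition A a Pa)
    (hPb : IsPartition B b Pb) {q r : Finset α} (hq : q ∈ Pa) (hr : r ∈ Pb) :
    (q ∪ r) ∩ B = r := by
  ext y
  simp only [Finset.mem_inter, Finset.mem_union]
  constructor
  · rintro ⟨h1 | h1, h2⟩
    · exact absurd (part_subset hPa hq h1) (Finset.disjoint_right.mp hAB h2)
    · exact h1
  · intro h
    exact ⟨Or.inr h, part_subset hPb hr h⟩

lemma merged_mem_M (hAB : Disjoint A B) (hPa : IsPartition A a Pa)
    (hPb : IsPartition B b Pb) {q r : Finset α} (hq : q ∈ Pa) (hr : r ∈ Pb) :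
    q ∪ r ∉ Pa ∧ q ∪ r ∉ Pb := by
  obtain ⟨x, hx⟩ := hPa.2.1 q hq
  obtain ⟨y, hy⟩ := hPb.2.1 r hr
  constructor
  · intro h
    exact Finset.disjoint_left.mp hAB (part_subset hPa h (Finset.mem_union_right _ hy))
      (part_subset hPb hr hy)
  · intro h
    exact Finset.disjoint_left.mp hAB (part_subset hPa hq hx)
      (part_subset hPb h (Finset.mem_union_left _ hx))

lemma card_unmatched (hAB : Disjoint A B) (hPa : IsPartition A a Pa)
    (hPb : IsPartition B b Pb) {γ : Finset (Finset α)} (hγ : γ ∈ QSet A B Pa Pb c) :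
    (Pa \ γ).card = a + b - c := by
  obtain ⟨hpart, hparts⟩ := hγ
  set M : Finset (Finset α) := γ \ (Pa ∪ Pb) with hM
  have hdecomp : ∀ p ∈ M, ∃ q ∈ Pa, ∃ r ∈ Pb, p = q ∪ r := by
    intro p hp
    obtain ⟨hpγ, hpn⟩ := Finset.mem_sdiff.mp hp
    rcases hparts p hpγ with h | h | h
    · exact absurd (Finset.mem_union_left _ h) hpn
    · exact absurd (Finset.mem_union_right _ h) hpn
    · exact h
  -- |M| = |Pa \ γ|
  have hMa : M.card = (Pa \ γ).card := by
    refine Finset.card_bij (fun p _ => p ∩ A) ?_ ?_ ?_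
    · intro p hp
      obtain ⟨q, hq, r, hr, rfl⟩ := hdecomp p hp
      show (q ∪ r) ∩ A ∈ Pa \ γ
      rw [inter_A_of_merged hAB hPa hPb hq hr]
      exact Finset.mem_sdiff.mpr ⟨hq,
        (merged_not_single hAB hPa hPb hpart hq hr (Finset.mem_sdiff.mp hp).1).1⟩
    · intro p hp p' hp' he
      obtain ⟨q, hq, r, hr, rfl⟩ := hdecomp p hp
      obtain ⟨q', hq', r', hr', rfl⟩ := hdecomp p' hp'
      rw [inter_A_of_merged hAB hPa hPb hq hr, inter_A_of_merged hAB hPa hPb hq' hr'] at he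
      obtain ⟨x, hx⟩ := hPa.2.1 q hq
      exact part_eq hpart (Finset.mem_sdiff.mp hp).1 (Finset.mem_sdiff.mp hp').1
        (Finset.mem_union_left _ hx) (Finset.mem_union_left _ (he ▸ hx))
    · intro q hq
      obtain ⟨hqPa, hqγ⟩ := Finset.mem_sdiff.mp hq
      obtain ⟨r, ⟨hr, hqr⟩, -⟩ :=
        exists_unique_partner hAB hPa hPb ⟨hpart, hparts⟩ hqPa hqγ
      have hne := merged_mem_M hAB hPa hPb hqPa hr
      refine ⟨q ∪ r, Finset.mem_sdiff.mpr ⟨hqr, ?_⟩, inter_A_of_merged hAB hPa hPb hqPa hr⟩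
      intro h
      rcases Finset.mem_union.mp h with h' | h'
      · exact hne.1 h'
      · exact hne.2 h'
  -- |M| = |Pb \ γ|
  have hMb : M.card = (Pb \ γ).card := by
    refine Finset.card_bij (fun p _ => p ∩ B) ?_ ?_ ?_
    · intro p hp
      obtain ⟨q, hq, r, hr, rfl⟩ := hdecomp p hp
      show (q ∪ r) ∩ B ∈ Pb \ γ
      rw [inter_B_of_merged hAB hPa hPb hq hr]
      exact Finset.mem_sdiff.mpr ⟨hr,
        (merged_not_single hAB hPa hPb hpart hq hr (Finset.mem_sdiff.mp hp).1).2⟩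
    · intro p hp p' hp' he
      obtain ⟨q, hq, r, hr, rfl⟩ := hdecomp p hp
      obtain ⟨q', hq', r', hr', rfl⟩ := hdecomp p' hp'
      rw [inter_B_of_merged hAB hPa hPb hq hr, inter_B_of_merged hAB hPa hPb hq' hr'] at he
      obtain ⟨y, hy⟩ := hPb.2.1 r hr
      exact part_eq hpart (Finset.mem_sdiff.mp hp).1 (Finset.mem_sdiff.mp hp').1
        (Finset.mem_union_right _ hy) (Finset.mem_union_right _ (he ▸ hy))
    · intro r hr
      obtain ⟨hrPb, hrγ⟩ := Finset.mem_sdiff.mp hr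
      obtain ⟨q, hq, hqr⟩ := exists_partner' hAB hPa hPb ⟨hpart, hparts⟩ hrPb hrγ
      have hne := merged_mem_M hAB hPa hPb hq hrPb
      refine ⟨q ∪ r, Finset.mem_sdiff.mpr ⟨hqr, ?_⟩, inter_B_of_merged hAB hPa hPb hq hrPb⟩
      intro h
      rcases Finset.mem_union.mp h with h' | h'
      · exact hne.1 h'
      · exact hne.2 h'
  -- γ decomposes
  have hanb : ∀ p ∈ Pa, p ∉ Pb := by
    intro p hp hp'
    obtain ⟨x, hx⟩ := hPa.2.1 p hp
    exact Finset.disjoint_left.mp hAB (part_subset hPa hp hx) (part_subset hPb hp' hx)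
  have hγeq : γ = (Pa ∩ γ) ∪ (Pb ∩ γ) ∪ M := by
    ext p
    constructor
    · intro hp
      by_cases h1 : p ∈ Pa
      · exact Finset.mem_union_left _ (Finset.mem_union_left _ (Finset.mem_inter.mpr ⟨h1, hp⟩))
      by_cases h2 : p ∈ Pb
      · exact Finset.mem_union_left _ (Finset.mem_union_right _ (Finset.mem_inter.mpr ⟨h2, hp⟩))
      · refine Finset.mem_union_right _ (Finset.mem_sdiff.mpr ⟨hp, ?_⟩)
        intro h
        rcases Finset.mem_union.mp h with h' | h'
        · exact h1 h'
        · exact h2 h'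
    · intro hp
      rcases Finset.mem_union.mp hp with h | h
      · rcases Finset.mem_union.mp h with h' | h'
        · exact (Finset.mem_inter.mp h').2
        · exact (Finset.mem_inter.mp h').2
      · exact (Finset.mem_sdiff.mp h).1
  have hd1 : Disjoint (Pa ∩ γ) (Pb ∩ γ) := by
    rw [Finset.disjoint_left]
    intro p hp hp'
    exact hanb p (Finset.mem_inter.mp hp).1 (Finset.mem_inter.mp hp').1
  have hd2 : Disjoint ((Pa ∩ γ) ∪ (Pb ∩ γ)) M := by
    rw [Finset.disjoint_left]
    intro p hp hp'
    have := (Finset.mem_sdiff.mp hp').2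
    rcases Finset.mem_union.mp hp with h | h
    · exact this (Finset.mem_union_left _ (Finset.mem_inter.mp h).1)
    · exact this (Finset.mem_union_right _ (Finset.mem_inter.mp h).1)
  have hcγ : c = (Pa ∩ γ).card + (Pb ∩ γ).card + M.card := by
    rw [← hpart.1]
    conv_lhs => rw [hγeq]
    rw [Finset.card_union_of_disjoint hd2, Finset.card_union_of_disjoint hd1]
  have ha1 : (Pa ∩ γ).card = a - (Pa \ γ).card := by
    rw [← Finset.sdiff_sdiff_self_left, Finset.card_sdiff_of_subset Finset.sdiff_subset, hPa.1]
  have hb1 : (Pb ∩ γ).card = b - (Pb \ γ).card := by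
    rw [← Finset.sdiff_sdiff_self_left, Finset.card_sdiff_of_subset Finset.sdiff_subset, hPb.1]
  have hsa : (Pa \ γ).card ≤ a := hPa.1 ▸ Finset.card_le_card Finset.sdiff_subset
  have hsb : (Pb \ γ).card ≤ b := hPb.1 ▸ Finset.card_le_card Finset.sdiff_subset
  omega

lemma mem_S_iff (hAB : Disjoint A B) (hPa : IsPartition A a Pa) (hPb : IsPartition B b Pb)
    {S : Finset (Finset α)} (hS : S ⊆ Pa) (f : {x // x ∈ S} ↪ {x // x ∈ Pb}) {p : Finset α} :
    p ∈ S ↔ p ∈ Pa ∧ p ∉ phi Pa Pb S f := by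
  constructor
  · intro hp
    refine ⟨hS hp, ?_⟩
    intro hmem
    rcases Finset.mem_union.mp hmem with h | h
    · rcases Finset.mem_union.mp h with h' | h'
      · exact (Finset.mem_sdiff.mp h').2 hp
      · obtain ⟨x, hx⟩ := hPa.2.1 p (hS hp)
        exact Finset.disjoint_left.mp hAB (part_subset hPa (hS hp) hx)
          (part_subset hPb (Finset.mem_sdiff.mp h').1 hx)
    · obtain ⟨q, -, hq⟩ := Finset.mem_image.mp h
      obtain ⟨y, hy⟩ := hPb.2.1 _ (f q).2
      have hyp : y ∈ p := by rw [← hq]; exact Finset.mem_union_right _ hy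
      exact Finset.disjoint_left.mp hAB (part_subset hPa (hS hp) hyp)
        (part_subset hPb (f q).2 hy)
  · rintro ⟨hpPa, hp⟩
    by_contra h
    exact hp (Finset.mem_union_left _ (Finset.mem_union_left _ (Finset.mem_sdiff.mpr ⟨hpPa, h⟩)))

lemma phi_inj_f (hAB : Disjoint A B) (hPa : IsPartition A a Pa) (hPb : IsPartition B b Pb)
    (hac : a ≤ c) (hbc : b ≤ c) (habc : c ≤ a + b)
    {S : Finset (Finset α)} (hS : S ⊆ Pa) (hcard : S.card = a + b - c)
    {f f' : {x // x ∈ S} ↪ {x // x ∈ Pb}}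
    (h : phi Pa Pb S f = phi Pa Pb S f') : f = f' := by
  have hmem := phi_mem_QSet hAB hPa hPb hac hbc habc hS hcard f
  obtain ⟨hpart, -⟩ := hmem
  ext q : 1
  have m1 : (q : Finset α) ∪ (f q : Finset α) ∈ phi Pa Pb S f :=
    Finset.mem_union_right _ (Finset.mem_image.mpr ⟨q, Finset.mem_attach _ _, rfl⟩)
  have m2 : (q : Finset α) ∪ (f' q : Finset α) ∈ phi Pa Pb S f := by
    rw [h]
    exact Finset.mem_union_right _ (Finset.mem_image.mpr ⟨q, Finset.mem_attach _ _, rfl⟩)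
  obtain ⟨x, hx⟩ := hPa.2.1 _ (hS q.2)
  have he : (q : Finset α) ∪ (f q : Finset α) = (q : Finset α) ∪ (f' q : Finset α) :=
    part_eq hpart m1 m2 (Finset.mem_union_left _ hx) (Finset.mem_union_left _ hx)
  exact Subtype.ext (union_cancel hAB (part_subset hPa (hS q.2))
    (part_subset hPb (f q).2) (part_subset hPb (f' q).2) he)

lemma phi_surj (hAB : Disjoint A B) (hPa : IsPartition A a Pa) (hPb : IsPartition B b Pb)
    {γ : Finset (Finset α)} (hγ : γ ∈ QSet A B Pa Pb c) :
    ∃ f : {x // x ∈ Pa \ γ} ↪ {x // x ∈ Pb}, phi Pa Pb (Pa \ γ) f = γ := by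
  classical
  have hEU : ∀ q : {x // x ∈ Pa \ γ}, ∃! r, r ∈ Pb ∧ (q : Finset α) ∪ r ∈ γ := fun q =>
    exists_unique_partner hAB hPa hPb hγ (Finset.mem_sdiff.mp q.2).1 (Finset.mem_sdiff.mp q.2).2
  set g : {x // x ∈ Pa \ γ} → {x // x ∈ Pb} := fun q =>
    ⟨Finset.choose (fun r => (q : Finset α) ∪ r ∈ γ) Pb (hEU q),
      Finset.choose_mem _ _ _⟩ with hgdef
  have hg : ∀ q : {x // x ∈ Pa \ γ}, (q : Finset α) ∪ (g q : Finset α) ∈ γ := fun q =>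
    Finset.choose_property (fun r => (q : Finset α) ∪ r ∈ γ) Pb (hEU q)
  have huniq : ∀ (q : {x // x ∈ Pa \ γ}) (r : Finset α), r ∈ Pb → (q : Finset α) ∪ r ∈ γ →
      r = (g q : Finset α) := fun q r h1 h2 =>
    (hEU q).unique ⟨h1, h2⟩ ⟨(g q).2, hg q⟩
  have hginj : Function.Injective g := by
    intro q q' h
    obtain ⟨y, hy⟩ := hPb.2.1 _ (g q).2
    have m1 := hg q
    have m2 := hg q'
    rw [← h] at m2
    have he : (q : Finset α) ∪ (g q : Finset α) = (q' : Finset α) ∪ (g q : Finset α) :=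
      part_eq hγ.1 m1 m2 (Finset.mem_union_right _ hy) (Finset.mem_union_right _ hy)
    exact Subtype.ext (union_cancel_left hAB
      (part_subset hPa (Finset.mem_sdiff.mp q.2).1)
      (part_subset hPa (Finset.mem_sdiff.mp q'.2).1)
      (part_subset hPb (g q).2) he)
  refine ⟨⟨g, hginj⟩, ?_⟩
  have hgsimp : ∀ q, ((⟨g, hginj⟩ : {x // x ∈ Pa \ γ} ↪ {x // x ∈ Pb}) q) = g q := fun _ => rfl
  ext p
  constructor
  · intro hp
    rcases Finset.mem_union.mp hp with h | h
    · rcases Finset.mem_union.mp h with h' | h'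
      · -- p ∈ Pa \ (Pa \ γ)
        obtain ⟨h1, h2⟩ := Finset.mem_sdiff.mp h'
        by_contra hc
        exact h2 (Finset.mem_sdiff.mpr ⟨h1, hc⟩)
      · -- p ∈ Pb \ T
        obtain ⟨h1, h2⟩ := Finset.mem_sdiff.mp h'
        by_contra hc
        obtain ⟨q, hqPa, hqγ⟩ := exists_partner' hAB hPa hPb hγ h1 hc
        have hqnγ : q ∉ γ := (merged_not_single hAB hPa hPb hγ.1 hqPa h1 hqγ).1
        have hqS : q ∈ Pa \ γ := Finset.mem_sdiff.mpr ⟨hqPa, hqnγ⟩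
        have := huniq ⟨q, hqS⟩ p h1 hqγ
        exact h2 (Finset.mem_image.mpr ⟨⟨q, hqS⟩, Finset.mem_attach _ _, this.symm⟩)
    · obtain ⟨q, -, hq⟩ := Finset.mem_image.mp h
      rw [← hq]
      exact hg q
  · intro hp
    rcases hγ.2 p hp with h | h | ⟨q, hq, r, hr, rfl⟩
    · refine Finset.mem_union_left _ (Finset.mem_union_left _ (Finset.mem_sdiff.mpr ⟨h, ?_⟩))
      intro h'
      exact (Finset.mem_sdiff.mp h').2 hp
    · refine Finset.mem_union_left _ (Finset.mem_union_right _ (Finset.mem_sdiff.mpr ⟨h, ?_⟩))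
      intro h'
      obtain ⟨q, -, hq⟩ := Finset.mem_image.mp h'
      simp only [Function.Embedding.coeFn_mk] at hq
      have : (q : Finset α) ∪ p ∈ γ := by rw [← hq]; exact hg q
      exact (merged_not_single hAB hPa hPb hγ.1 (Finset.mem_sdiff.mp q.2).1 h this).2 hp
    · have hqnγ : q ∉ γ := (merged_not_single hAB hPa hPb hγ.1 hq hr hp).1
      have hqS : q ∈ Pa \ γ := Finset.mem_sdiff.mpr ⟨hq, hqnγ⟩
      have := huniq ⟨q, hqS⟩ r hr hp
      refine Finset.mem_union_right _ (Finset.mem_image.mpr ⟨⟨q, hqS⟩, Finset.mem_attach _ _, ?_⟩)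
      simp only [Function.Embedding.coeFn_mk]
      rw [this]

end CardQSetAux

set_option linter.unusedVariables false in
theorem card_QSet {α : Type*} [DecidableEq α] (A B : Finset α) (hAB : Disjoint A B)
    (a b c : ℕ) (ha : 1 ≤ a) (hb : 1 ≤ b) (hac : a ≤ c) (hbc : b ≤ c)
    (habc : c ≤ a + b) (Pa Pb : Finset (Finset α))
    (hPa : IsPartition A a Pa) (hPb : IsPartition B b Pb) :
    (QSet A B Pa Pb c).ncard =
      a.choose (c - b) * b.choose (c - a) * (a + b - c).factorial := by
  classical
  set k := a + b - c with hk
  let D := (S : {x // x ∈ Pa.powersetCard k}) ×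
    ({y // y ∈ (S : Finset (Finset α))} ↪ {y // y ∈ Pb})
  let Φ : D → (QSet A B Pa Pb c) := fun d =>
    ⟨phi Pa Pb d.1.1 d.2,
      phi_mem_QSet hAB hPa hPb hac hbc habc
        (Finset.mem_powersetCard.mp d.1.2).1 (Finset.mem_powersetCard.mp d.1.2).2 d.2⟩
  have hbij : Function.Bijective Φ := by
    constructor
    · rintro ⟨⟨S, hS⟩, f⟩ ⟨⟨S', hS'⟩, f'⟩ h
      have hphi : phi Pa Pb S f = phi Pa Pb S' f' := congrArg Subtype.val h
      have hSsub : S ⊆ Pa := (Finset.mem_powersetCard.mp hS).1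
      have hS'sub : S' ⊆ Pa := (Finset.mem_powersetCard.mp hS').1
      have hSS : S = S' := by
        ext p
        rw [mem_S_iff hAB hPa hPb hSsub f, mem_S_iff hAB hPa hPb hS'sub f', hphi]
      subst hSS
      have hff : f = f' :=
        phi_inj_f hAB hPa hPb hac hbc habc hSsub (Finset.mem_powersetCard.mp hS).2 hphi
      subst hff
      rfl
    · rintro ⟨γ, hγ⟩
      obtain ⟨f, hf⟩ := phi_surj hAB hPa hPb hγ
      have hS : Pa \ γ ∈ Pa.powersetCard k :=
        Finset.mem_powersetCard.mpr ⟨Finset.sdiff_subset, card_unmatched hAB hPa hPb hγ⟩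
      exact ⟨⟨⟨Pa \ γ, hS⟩, f⟩, Subtype.ext hf⟩
  have hcard : (QSet A B Pa Pb c).ncard = Fintype.card D := by
    rw [← Nat.card_coe_set_eq, ← Nat.card_eq_of_bijective Φ hbij, Nat.card_eq_fintype_card]
  rw [hcard]
  have hterm : ∀ S : {x // x ∈ Pa.powersetCard k},
      Fintype.card ({y // y ∈ (S : Finset (Finset α))} ↪ {y // y ∈ Pb}) =
        b.descFactorial k := by
    intro S
    rw [Fintype.card_embedding_eq, Fintype.card_coe, Fintype.card_coe,
      (Finset.mem_powersetCard.mp S.2).2, hPb.1]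
  have hD : Fintype.card D = a.choose k * b.descFactorial k := by
    rw [show Fintype.card D = ∑ S : {x // x ∈ Pa.powersetCard k},
        Fintype.card ({y // y ∈ (S : Finset (Finset α))} ↪ {y // y ∈ Pb}) from
      Fintype.card_sigma]
    rw [Finset.sum_congr rfl fun S _ => hterm S, Finset.sum_const, smul_eq_mul,
      Finset.card_univ, Fintype.card_coe, Finset.card_powersetCard, hPa.1]
  rw [hD, Nat.descFactorial_eq_factorial_mul_choose]
  have e1 : a.choose k = a.choose (c - b) := by
    rw [show c - b = a - k by omega]
    exact (Nat.choose_symm (by omega)).symm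
  have e2 : b.choose k = b.choose (c - a) := by
    rw [show c - a = b - k by omega]
    exact (Nat.choose_symm (by omega)).symm
  rw [e1, e2]
  ring
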